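/- Let S be a nonempty finite set, let (μ_v)_{v ∈ S} be a family of probability measures on a measurable space Z, let ε > 0, δ ≥ 0, and suppose that for all v, v′ ∈ S and all measurable A ⊆ Z, μ_v(A) ≤ exp(ε)·μ_{v′}(A) + δ. For η ∈ [0,1], define the degraded mechanism ν_v = η·μ_v + (1−η)·(1/|S|)·∑_{u ∈ S} μ_u. Then for all v, v′ ∈ S and all measurable A ⊆ Z, ν_v(A) ≤ (1 + η·(exp(ε) − 1))·ν_{v′}(A) + η·δ; that is, ν_v and ν_{v′} are (log(1 + η·(exp(ε) − 1)), η·δ)-close. -/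
import Mathlib


open MeasureTheory

/-- Let `S` be a nonempty finite set, `(μ_v)_{v ∈ S}` a family of
probability measures on `Z` with `μ_v(A) ≤ exp(ε)·μ_{v'}(A) + δ` for all `v, v'` and
measurable `A`. For `η ∈ [0,1]` define the degraded mechanism
`ν_v = η·μ_v + (1−η)·(1/|S|)·∑_u μ_u`. Then for all `v, v'` and measurable `A`,
`ν_v(A) ≤ (1 + η·(exp(ε) − 1))·ν_{v'}(A) + η·δ`. -/
lemma key_real (n : ℕ) (hn : 0 < n) (E x y M δ η : ℝ)
    (hE : 1 ≤ E) (hδ : 0 ≤ δ) (hη0 : 0 ≤ η) (hη1 : η ≤ 1)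
    (hxy : x ≤ E * y + δ) (hxM : (n : ℝ) * x ≤ E * M + n * δ) :
    η * x + (1 - η) / n * M
      ≤ (1 + η * (E - 1)) * (η * y + (1 - η) / n * M) + η * δ := by
  have hE0 : (0:ℝ) < E := lt_of_lt_of_le one_pos hE
  have hn0 : (0:ℝ) < n := Nat.cast_pos.mpr hn
  have h1 : (x - δ) / E ≤ y := by
    rw [div_le_iff₀ hE0]; linarith
  have h2 : (x - δ) / E ≤ M / n := by
    rw [div_le_div_iff₀ hE0 hn0]; linarith
  have hc1 : (0:ℝ) ≤ 1 + η * (E - 1) := by nlinarith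
  have hc2 : (0:ℝ) ≤ (E - 1) * (1 - η) := by nlinarith
  have hkey : x - δ ≤ (1 + η * (E - 1)) * y + (E - 1) * (1 - η) * (M / n) := by
    have b1 : (1 + η * (E - 1)) * ((x - δ)/E) ≤ (1 + η * (E - 1)) * y :=
      mul_le_mul_of_nonneg_left h1 hc1
    have b2 : (E - 1) * (1 - η) * ((x - δ)/E) ≤ (E - 1) * (1 - η) * (M / n) :=
      mul_le_mul_of_nonneg_left h2 hc2
    have : (1 + η * (E - 1)) * ((x - δ)/E) + (E - 1) * (1 - η) * ((x - δ)/E)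
        = x - δ := by field_simp; ring
    linarith
  have hM' : (1 - η) / (n:ℝ) * M = (1 - η) * (M / n) := by ring
  rw [hM']
  nlinarith [mul_le_mul_of_nonneg_left hkey hη0]

theorem degrading_channel_privacy_amplification
    {S : Type*} [Fintype S] [Nonempty S]
    {Z : Type*} [MeasurableSpace Z]
    (μ : S → Measure Z) [∀ v, IsProbabilityMeasure (μ v)]
    (ε δ η : ℝ) (hε : 0 < ε) (hδ : 0 ≤ δ) (hη0 : 0 ≤ η) (hη1 : η ≤ 1)
    (hclose : ∀ v v' : S, ∀ A : Set Z, MeasurableSet A →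
      μ v A ≤ ENNReal.ofReal (Real.exp ε) * μ v' A + ENNReal.ofReal δ) :
    ∀ v v' : S, ∀ A : Set Z, MeasurableSet A →
      (ENNReal.ofReal η • μ v
          + ENNReal.ofReal ((1 - η) / (Fintype.card S : ℝ)) • ∑ u : S, μ u) A
        ≤ ENNReal.ofReal (1 + η * (Real.exp ε - 1)) *
            ((ENNReal.ofReal η • μ v'
              + ENNReal.ofReal ((1 - η) / (Fintype.card S : ℝ)) • ∑ u : S, μ u) A)
          + ENNReal.ofReal (η * δ) := by
  intro v v' A hA
  have hn : 0 < Fintype.card S := Fintype.card_pos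
  have hE : 1 ≤ Real.exp ε := Real.one_le_exp hε.le
  have hμ : ∀ w : S, μ w A = ENNReal.ofReal ((μ w A).toReal) :=
    fun w => (ENNReal.ofReal_toReal (measure_ne_top _ _)).symm
  set x := (μ v A).toReal with hx
  set y := (μ v' A).toReal with hy
  set Msum := ∑ u : S, (μ u A).toReal with hMs
  have hreal : ∀ u : S, x ≤ Real.exp ε * (μ u A).toReal + δ := by
    intro u
    have h := hclose v u A hA
    have hfin : ENNReal.ofReal (Real.exp ε) * μ u A + ENNReal.ofReal δ ≠ ⊤ := by
      finiteness
    have h2 := ENNReal.toReal_mono hfin h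
    rwa [ENNReal.toReal_add (by finiteness) (by finiteness), ENNReal.toReal_mul,
      ENNReal.toReal_ofReal (Real.exp_pos ε).le, ENNReal.toReal_ofReal hδ] at h2
  have hxM : (Fintype.card S : ℝ) * x ≤ Real.exp ε * Msum + (Fintype.card S : ℝ) * δ := by
    have h1 : ∑ _u : S, x ≤ ∑ u : S, (Real.exp ε * (μ u A).toReal + δ) :=
      Finset.sum_le_sum fun u _ => hreal u
    have e1 : ∑ _u : S, x = (Fintype.card S : ℝ) * x := by
      simp [Finset.sum_const, nsmul_eq_mul]
    have e2 : ∑ u : S, (Real.exp ε * (μ u A).toReal + δ)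
        = Real.exp ε * Msum + (Fintype.card S : ℝ) * δ := by
      rw [Finset.sum_add_distrib, ← Finset.mul_sum]
      simp [Finset.sum_const, nsmul_eq_mul, hMs]
    linarith [e1 ▸ e2 ▸ h1]
  have hkey := key_real (Fintype.card S) hn (Real.exp ε) x y Msum δ η hE hδ hη0 hη1
    (hreal v') hxM
  have cS : (0:ℝ) ≤ (1 - η) / (Fintype.card S : ℝ) :=
    div_nonneg (by linarith) (Nat.cast_nonneg _)
  have hc1 : (0:ℝ) ≤ 1 + η * (Real.exp ε - 1) := by nlinarith
  have hMnn : (0:ℝ) ≤ Msum := Finset.sum_nonneg fun u _ => ENNReal.toReal_nonneg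
  have sum_eq : ∑ u : S, μ u A = ENNReal.ofReal Msum := by
    rw [hMs, ENNReal.ofReal_sum_of_nonneg (fun u _ => ENNReal.toReal_nonneg)]
    exact Finset.sum_congr rfl fun u _ => hμ u
  simp only [Measure.add_apply, Measure.smul_apply, smul_eq_mul,
    Measure.finset_sum_apply]
  rw [sum_eq, hμ v, hμ v', ← hx, ← hy,
    ← ENNReal.ofReal_mul hη0, ← ENNReal.ofReal_mul cS,
    ← ENNReal.ofReal_mul hη0,
    ← ENNReal.ofReal_add (by positivity) (by positivity),
    ← ENNReal.ofReal_add (by positivity) (by positivity),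
    ← ENNReal.ofReal_mul hc1,
    ← ENNReal.ofReal_add (by positivity) (by positivity)]
  exact ENNReal.ofReal_le_ofReal hkey
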